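/- arXiv:1708.08090 — 7 statements merged into one kernel-verified Lean document; each statement's English description precedes it below -/
import Mathlib

section
/- Let V be a square integer matrix of size 2g written in block form V = [[0, Q],[R, S]] where the upper-left g×g block is zero. Then det(t^{1/2} V - t^{-1/2} Vᵀ) = det(t Q - Rᵀ) · det(t^{-1} Q - Rᵀ). Equivalently, setting f(t) = det(t Q - Rᵀ), the Laurent polynomial ∇(t) = det(t V - Vᵀ)·t^{-g} satisfies ∇(t) = f(t) f(t^{-1}). -/
open Matrix LaurentPolynomial

/-- The sign of the block-swap permutation on `Fin g ⊕ Fin g` is `(-1)^g`. -/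
lemma sign_sumComm_fin (g : ℕ) :
    Equiv.Perm.sign ((Equiv.sumComm (Fin g) (Fin g)) : Equiv.Perm (Fin g ⊕ Fin g)) = (-1) ^ g := by
  have h := Equiv.Perm.sign_eq_sign_of_equiv
    ((Equiv.prodCongrLeft (fun _ : Fin g => Equiv.swap true false)) : Equiv.Perm (Bool × Fin g))
    ((Equiv.sumComm (Fin g) (Fin g)) : Equiv.Perm (Fin g ⊕ Fin g))
    (Equiv.boolProdEquivSum (Fin g))
    (by rintro ⟨(_ | _), a⟩ <;> simp [Equiv.prodCongrLeft_apply])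
  rw [← h, Equiv.Perm.sign_prodCongrLeft]
  simp [Equiv.Perm.sign_swap (by decide : (true : Bool) ≠ false)]

/-- Determinant of a block matrix whose upper-left block vanishes. -/
lemma det_fromBlocks_zero₁₁' {α : Type*} [CommRing α] {g : ℕ}
    (B C D : Matrix (Fin g) (Fin g) α) :
    (Matrix.fromBlocks 0 B C D).det = (-1) ^ g * (B.det * C.det) := by
  have h := Matrix.det_permute' ((Equiv.sumComm (Fin g) (Fin g)) : Equiv.Perm (Fin g ⊕ Fin g))
    (Matrix.fromBlocks 0 B C D)
  have hsub : (Matrix.fromBlocks 0 B C D).submatrix id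
      ((Equiv.sumComm (Fin g) (Fin g)) : Equiv.Perm (Fin g ⊕ Fin g)) =
      Matrix.fromBlocks B 0 D C := by
    have he : ⇑((Equiv.sumComm (Fin g) (Fin g)) : Equiv.Perm (Fin g ⊕ Fin g)) = Sum.swap := rfl
    rw [he, Matrix.fromBlocks_submatrix_sum_swap_right, Matrix.submatrix_id_id]
  rw [hsub, sign_sumComm_fin, Matrix.det_fromBlocks_zero₁₂] at h
  have hc : (((-1 : ℤˣ) ^ g : ℤˣ) : α) = (-1 : α) ^ g := by push_cast; ring
  rw [hc] at h
  have h' : (-1 : α) ^ g * (B.det * C.det)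
      = (-1 : α) ^ g * ((-1 : α) ^ g * (Matrix.fromBlocks 0 B C D).det) := by rw [← h]
  rw [h', ← mul_assoc, ← mul_pow]; ring_nf

/-- Fox–Milnor type factorization: for a `2g × 2g` integer matrix
`V = [[0, Q],[R, S]]` with vanishing upper-left `g × g` block, the balanced
directed Alexander polynomial `∇(t) = t^{-g}·det(t V - Vᵀ)` factors as
`f(t)·f(t⁻¹)` with `f(t) = det(t Q - Rᵀ)`. -/
theorem directed_alexander_block_factorization (g : ℕ)
    (Q R S : Matrix (Fin g) (Fin g) ℤ) :
    (T (-(g : ℤ)) : LaurentPolynomial ℤ) *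
      ((T 1 : LaurentPolynomial ℤ) •
          (Matrix.fromBlocks (0 : Matrix (Fin g) (Fin g) ℤ) Q R S).map
            (Int.cast : ℤ → LaurentPolynomial ℤ) -
        ((Matrix.fromBlocks (0 : Matrix (Fin g) (Fin g) ℤ) Q R S).map
            (Int.cast : ℤ → LaurentPolynomial ℤ))ᵀ).det =
    ((T 1 : LaurentPolynomial ℤ) • Q.map (Int.cast : ℤ → LaurentPolynomial ℤ) -
        (R.map (Int.cast : ℤ → LaurentPolynomial ℤ))ᵀ).det *
    ((T (-1) : LaurentPolynomial ℤ) • Q.map (Int.cast : ℤ → LaurentPolynomial ℤ) -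
        (R.map (Int.cast : ℤ → LaurentPolynomial ℤ))ᵀ).det := by
  set c : ℤ → LaurentPolynomial ℤ := Int.cast
  set Q' := Q.map c
  set R' := R.map c
  set S' := S.map c
  have hV : (Matrix.fromBlocks (0 : Matrix (Fin g) (Fin g) ℤ) Q R S).map c
      = Matrix.fromBlocks 0 Q' R' S' := by
    rw [Matrix.fromBlocks_map]
    ext i j : 1
    simp [c, Q', R', S']
  rw [hV]
  have hM : (T 1 : LaurentPolynomial ℤ) • Matrix.fromBlocks 0 Q' R' S' -
      (Matrix.fromBlocks 0 Q' R' S')ᵀ =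
      Matrix.fromBlocks 0 ((T 1 : LaurentPolynomial ℤ) • Q' - R'ᵀ)
        ((T 1 : LaurentPolynomial ℤ) • R' - Q'ᵀ) ((T 1 : LaurentPolynomial ℤ) • S' - S'ᵀ) := by
    ext (i | i) (j | j) <;> simp [Matrix.fromBlocks]
  rw [hM, det_fromBlocks_zero₁₁']
  have hC : ((T 1 : LaurentPolynomial ℤ) • R' - Q'ᵀ).det
      = (-1 : LaurentPolynomial ℤ) ^ g * T (g : ℤ) *
        ((T (-1) : LaurentPolynomial ℤ) • Q' - R'ᵀ).det := by
    have h1 : ((T 1 : LaurentPolynomial ℤ) • R' - Q'ᵀ).det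
        = ((T 1 : LaurentPolynomial ℤ) • R'ᵀ - Q').det := by
      rw [← Matrix.det_transpose ((T 1 : LaurentPolynomial ℤ) • R' - Q'ᵀ),
        Matrix.transpose_sub, Matrix.transpose_smul, Matrix.transpose_transpose]
    have h2 : (T 1 : LaurentPolynomial ℤ) • R'ᵀ - Q'
        = (-(T 1) : LaurentPolynomial ℤ) • ((T (-1) : LaurentPolynomial ℤ) • Q' - R'ᵀ) := by
      have hm : (-(T 1) : LaurentPolynomial ℤ) * T (-1) = -1 := by
        rw [neg_mul, ← T_add]; norm_num [T_zero]
      rw [smul_sub, smul_smul, hm, neg_one_smul, neg_smul, sub_neg_eq_add]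
      abel
    rw [h1, h2, Matrix.det_smul, Fintype.card_fin]
    have h3 : (-(T 1) : LaurentPolynomial ℤ) ^ g
        = (-1 : LaurentPolynomial ℤ) ^ g * T (g : ℤ) := by
      rw [neg_pow, T_pow]; norm_num
    rw [h3, mul_assoc]
  rw [hC]
  have hT : (T (-(g : ℤ)) : LaurentPolynomial ℤ) * T (g : ℤ) = 1 := by
    rw [← T_add]; norm_num [T_zero]
  have hs : ((-1 : LaurentPolynomial ℤ)) ^ g * (-1) ^ g = 1 := by
    rw [← mul_pow]; norm_num
  calc (T (-(g : ℤ)) : LaurentPolynomial ℤ) *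
      ((-1) ^ g * (((T 1 : LaurentPolynomial ℤ) • Q' - R'ᵀ).det *
        ((-1 : LaurentPolynomial ℤ) ^ g * T (g : ℤ) *
          ((T (-1) : LaurentPolynomial ℤ) • Q' - R'ᵀ).det)))
      = ((T (-(g : ℤ)) : LaurentPolynomial ℤ) * T (g : ℤ)) *
        (((-1 : LaurentPolynomial ℤ)) ^ g * (-1) ^ g) *
        (((T 1 : LaurentPolynomial ℤ) • Q' - R'ᵀ).det *
          ((T (-1) : LaurentPolynomial ℤ) • Q' - R'ᵀ).det) := by ring
    _ = _ := by rw [hT, hs]; ring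
end

section
/- Let V⁺, V⁻ be 2g×2g real matrices each having a (g-k)×(g-k) block of zeros in the upper-left corner (0 ≤ k ≤ g), and let ω ≠ 1 be a complex number of modulus 1 such that the Hermitian matrix M = (1-ω)V^± + (1-ω̄)(V^±)ᵀ is nonsingular. Then |sig(M)| ≤ 2k. -/
open Matrix

/-- The signature of a Hermitian matrix: the number of positive eigenvalues
minus the number of negative eigenvalues. -/
noncomputable def matSig {𝕜 : Type*} [RCLike 𝕜] {n : Type*} [Fintype n] [DecidableEq n]
    {A : Matrix n n 𝕜} (hA : A.IsHermitian) : ℤ := by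
  classical
  exact ((Finset.univ.filter (fun i => 0 < hA.eigenvalues i)).card : ℤ) -
    ((Finset.univ.filter (fun i => hA.eigenvalues i < 0)).card : ℤ)

section AuxOmegaSig
open Finset

private lemma quadForm_eq' {N : ℕ} {M : Matrix (Fin N) (Fin N) ℂ} (hM : M.IsHermitian)
    (x : Fin N → ℂ) :
    star x ⬝ᵥ M *ᵥ x =
      ((∑ i, hM.eigenvalues i *
        Complex.normSq ((star (hM.eigenvectorUnitary : Matrix (Fin N) (Fin N) ℂ) *ᵥ x) i) : ℝ) : ℂ) := by
  set U : Matrix (Fin N) (Fin N) ℂ := (hM.eigenvectorUnitary : Matrix (Fin N) (Fin N) ℂ) with hU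
  set y := star U *ᵥ x with hy
  conv_lhs => rw [hM.spectral_theorem, Unitary.conjStarAlgAut_apply]
  rw [mul_assoc, ← mulVec_mulVec, ← mulVec_mulVec, dotProduct_mulVec]
  have h1 : star x ᵥ* U = star y := by
    simp [hy, star_mulVec, Matrix.star_eq_conjTranspose]
  rw [h1, ← hy]
  push_cast
  rw [dotProduct]
  refine Finset.sum_congr rfl fun i _ => ?_
  rw [mulVec_diagonal]
  simp only [Pi.star_apply, Function.comp_apply, RCLike.star_def]
  rw [Complex.normSq_eq_conj_mul_self]
  rw [mul_left_comm]
  rfl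

private lemma card_filter_coe_lt (n m : ℕ) (h : m ≤ n) :
    (Finset.univ.filter (fun i : Fin n => (i : ℕ) < m)).card = m := by
  rw [Finset.card_filter,
    Fin.sum_univ_eq_sum_range (fun i => if i < m then 1 else 0), ← Finset.card_filter,
    ← Nat.Iio_eq_range, Finset.Iio_filter_lt, min_comm, min_eq_left h, Nat.card_Iio]

private lemma card_le_sign {N m : ℕ} {M : Matrix (Fin N) (Fin N) ℂ} (hM : M.IsHermitian)
    (hmN : m ≤ N)
    (hnz : ∀ i, hM.eigenvalues i ≠ 0)
    (hzero : ∀ i j : Fin N, (i : ℕ) < m → (j : ℕ) < m → M i j = 0)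
    (ε : ℝ) (hε : ε = 1 ∨ ε = -1) :
    m ≤ (Finset.univ.filter (fun i => 0 < ε * hM.eigenvalues i)).card := by
  classical
  set U : Matrix (Fin N) (Fin N) ℂ := (hM.eigenvectorUnitary : Matrix (Fin N) (Fin N) ℂ) with hU
  set S : Finset (Fin N) := Finset.univ.filter (fun i : Fin N => (i : ℕ) < m) with hS
  set P : Finset (Fin N) := Finset.univ.filter (fun i => 0 < ε * hM.eigenvalues i) with hP
  have hεnz : ∀ i, ε * hM.eigenvalues i ≠ 0 := by
    intro i
    rcases hε with h | h <;> simp [h, hnz i]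
  set A : Matrix ↥P ↥S ℂ := fun p s => star U (p : Fin N) (s : Fin N) with hA
  have hinj : Function.Injective A.mulVecLin := by
    rw [← LinearMap.ker_eq_bot, LinearMap.ker_eq_bot']
    intro v hv
    simp only [mulVecLin_apply] at hv
    set xt : Fin N → ℂ := fun i => if h : i ∈ S then v ⟨i, h⟩ else 0 with hxt
    have hsupp : ∀ i : Fin N, ¬((i : ℕ) < m) → xt i = 0 := by
      intro i hi
      rw [hxt]
      exact dif_neg (by simp [hS, hi])
    set y := star U *ᵥ xt with hy
    have hyP : ∀ i : Fin N, i ∈ P → y i = 0 := by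
      intro i hiP
      have h0 : (A *ᵥ v) ⟨i, hiP⟩ = 0 := by simpa using congrFun hv ⟨i, hiP⟩
      have hyi : y i = ∑ s ∈ S.attach, star U i (s : Fin N) * v s := by
        rw [hy, mulVec, dotProduct,
          ← Finset.sum_subset (Finset.subset_univ S)
            (fun j _ hj => by rw [hxt]; simp [dif_neg hj])]
        rw [← Finset.sum_attach S (fun j => star U i j * xt j)]
        refine Finset.sum_congr rfl fun s _ => ?_
        rw [hxt]
        simp
      rw [hyi, ← h0]
      rw [mulVec, dotProduct, Finset.univ_eq_attach]
    have hq0 : star xt ⬝ᵥ M *ᵥ xt = 0 := by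
      rw [dotProduct]
      refine Finset.sum_eq_zero fun i _ => ?_
      by_cases hi : (i : ℕ) < m
      · rw [mulVec, dotProduct, Finset.mul_sum]
        refine Finset.sum_eq_zero fun j _ => ?_
        by_cases hj : (j : ℕ) < m
        · rw [hzero i j hi hj, zero_mul, mul_zero]
        · rw [hsupp j hj, mul_zero, mul_zero]
      · simp [hsupp i hi]
    have hreal0 : ∑ i, hM.eigenvalues i * Complex.normSq (y i) = 0 := by
      have := (quadForm_eq' hM xt).symm.trans hq0
      rwa [Complex.ofReal_eq_zero] at this
    have hreal : ∑ i, ε * hM.eigenvalues i * Complex.normSq (y i) = 0 := by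
      calc ∑ i, ε * hM.eigenvalues i * Complex.normSq (y i)
          = ε * ∑ i, hM.eigenvalues i * Complex.normSq (y i) := by
            rw [Finset.mul_sum]
            exact Finset.sum_congr rfl fun i _ => by rw [mul_assoc]
        _ = 0 := by rw [hreal0, mul_zero]
    have hterm : ∀ i ∈ Finset.univ, ε * hM.eigenvalues i * Complex.normSq (y i) ≤ 0 := by
      intro i _
      by_cases hiP : i ∈ P
      · rw [hyP i hiP]
        simp
      · have h1 : ε * hM.eigenvalues i ≤ 0 := by
          by_contra h
          exact hiP (by simp [hP, lt_of_not_ge h])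
        exact mul_nonpos_of_nonpos_of_nonneg h1 (Complex.normSq_nonneg _)
    have hzero' := (Finset.sum_eq_zero_iff_of_nonpos hterm).mp hreal
    have hy0 : y = 0 := by
      funext i
      by_cases hiP : i ∈ P
      · exact hyP i hiP
      · have h1 : ε * hM.eigenvalues i ≠ 0 := hεnz i
        have h2 := hzero' i (Finset.mem_univ i)
        have h3 : Complex.normSq (y i) = 0 := by
          rcases mul_eq_zero.mp h2 with h | h
          · exact absurd h h1
          · exact h
        simpa using Complex.normSq_eq_zero.mp h3
    have hUU : U * star U = 1 :=
      Matrix.mem_unitaryGroup_iff.mp (SetLike.coe_mem hM.eigenvectorUnitary)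
    have hxt0 : xt = 0 := by
      have h1 : U *ᵥ y = xt := by rw [hy, mulVec_mulVec, hUU, one_mulVec]
      rw [← h1, hy0, mulVec_zero]
    funext s
    have := congrFun hxt0 s
    rw [hxt] at this
    simpa using this
  have hle := LinearMap.finrank_le_finrank_of_injective hinj
  rw [Module.finrank_pi, Module.finrank_pi, Fintype.card_coe, Fintype.card_coe] at hle
  rw [hS] at hle
  rwa [card_filter_coe_lt N m hmN] at hle

end AuxOmegaSig

/-- If a `2g × 2g` real matrix `V` has a `(g-k) × (g-k)` block of zeros in its
upper-left corner and `ω ≠ 1` is a unit complex number such that the Hermitian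
matrix `M = (1-ω)V + (1-ω̄)Vᵀ` is nonsingular, then `|sig(M)| ≤ 2k`. -/
theorem omega_signature_bound (g k : ℕ) (hkg : k ≤ g)
    (V : Matrix (Fin (2 * g)) (Fin (2 * g)) ℝ)
    (hblock : ∀ i j : Fin (2 * g), (i : ℕ) < g - k → (j : ℕ) < g - k → V i j = 0)
    (ω : ℂ) (hω : ‖ω‖ = 1) (hω1 : ω ≠ 1)
    (hM : ((1 - ω) • V.map Complex.ofReal +
        (1 - (starRingEnd ℂ) ω) • (V.map Complex.ofReal)ᵀ).IsHermitian)
    (hdet : ((1 - ω) • V.map Complex.ofReal +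
        (1 - (starRingEnd ℂ) ω) • (V.map Complex.ofReal)ᵀ).det ≠ 0) :
    |matSig hM| ≤ 2 * (k : ℤ) := by
  classical
  have hnz : ∀ i, hM.eigenvalues i ≠ 0 := by
    intro i h
    apply hdet
    rw [hM.det_eq_prod_eigenvalues]
    exact Finset.prod_eq_zero (Finset.mem_univ i) (by rw [h]; simp)
  have hzeroblk : ∀ i j : Fin (2 * g), (i : ℕ) < g - k → (j : ℕ) < g - k →
      ((1 - ω) • V.map Complex.ofReal +
        (1 - (starRingEnd ℂ) ω) • (V.map Complex.ofReal)ᵀ) i j = 0 := by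
    intro i j hi hj
    simp [Matrix.add_apply, Matrix.smul_apply, Matrix.map_apply, Matrix.transpose_apply,
      hblock i j hi hj, hblock j i hj hi]
  have hp := card_le_sign hM (by omega) hnz hzeroblk 1 (Or.inl rfl)
  have hq := card_le_sign hM (by omega) hnz hzeroblk (-1) (Or.inr rfl)
  have hPQ : Finset.univ.filter (fun i => 0 < (-1 : ℝ) * hM.eigenvalues i)
      = Finset.univ.filter (fun i => hM.eigenvalues i < 0) := by
    apply Finset.filter_congr
    intro i _
    constructor <;> intro h <;> nlinarith
  rw [hPQ] at hq
  have h1 : Finset.univ.filter (fun i => 0 < (1 : ℝ) * hM.eigenvalues i)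
      = Finset.univ.filter (fun i => 0 < hM.eigenvalues i) := by
    simp
  rw [h1] at hp
  have hsum : (Finset.univ.filter (fun i => 0 < hM.eigenvalues i)).card
      + (Finset.univ.filter (fun i => hM.eigenvalues i < 0)).card = 2 * g := by
    have h2 := Finset.card_filter_add_card_filter_not (s := Finset.univ)
      (p := fun i : Fin (2 * g) => 0 < hM.eigenvalues i)
    rw [Finset.card_univ, Fintype.card_fin] at h2
    have h3 : (Finset.univ.filter (fun i : Fin (2 * g) => ¬0 < hM.eigenvalues i))
        = Finset.univ.filter (fun i => hM.eigenvalues i < 0) := by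
      apply Finset.filter_congr
      intro i _
      simp only [not_lt]
      exact ⟨fun h => lt_of_le_of_ne h (hnz i), le_of_lt⟩
    rw [h3] at h2
    exact h2
  unfold matSig
  rw [abs_le]
  constructor <;> omega
end

section
/- Let V⁺(K₊) = [[a, u],[v, W]] and V⁺(K₋) = [[a+1, u],[v, W]] be (n+1)×(n+1) matrices over ℤ[t^{1/2}, t^{-1/2}] data differing only in their (1,1) entry, and define ∇_±(t) = det(t^{1/2} V(K_±) - t^{-1/2} V(K_±)ᵀ) and ∇₀(t) = det(t^{1/2} W - t^{-1/2} Wᵀ). Then ∇₊(t) - ∇₋(t) = (t^{-1/2} - t^{1/2}) ∇₀(t). -/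
open Matrix LaurentPolynomial

/-- The directed Alexander polynomial of an integer matrix, computed in
`ℤ[t^{1/2}, t^{-1/2}]` modelled as Laurent polynomials in the formal
variable `T = t^{1/2}`: `∇(t) = det(t^{1/2} M - t^{-1/2} Mᵀ)`. -/
noncomputable def nablaPoly {α : Type*} [Fintype α] [DecidableEq α]
    (M : Matrix α α ℤ) : LaurentPolynomial ℤ :=
  ((T 1 : LaurentPolynomial ℤ) • M.map (Int.cast : ℤ → LaurentPolynomial ℤ) -
    (T (-1) : LaurentPolynomial ℤ) • (M.map (Int.cast : ℤ → LaurentPolynomial ℤ))ᵀ).det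

/-- Skein relation for directed Alexander polynomials: if `V(K₊)` and `V(K₋)`
differ only in their `(1,1)` entry (by `1`), then
`∇₊(t) - ∇₋(t) = (t^{-1/2} - t^{1/2}) ∇₀(t)` where `∇₀` comes from the
common block `W`. -/
theorem directed_alexander_skein (n : ℕ) (a : ℤ)
    (u : Matrix (Fin 1) (Fin n) ℤ) (v : Matrix (Fin n) (Fin 1) ℤ)
    (W : Matrix (Fin n) (Fin n) ℤ) :
    nablaPoly (Matrix.fromBlocks (Matrix.of fun _ _ => a) u v W) -
      nablaPoly (Matrix.fromBlocks (Matrix.of fun _ _ => a + 1) u v W) =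
    ((T (-1) : LaurentPolynomial ℤ) - T 1) * nablaPoly W := by
  classical
  set R := LaurentPolynomial ℤ
  set c : R := T (-1) - T 1 with hc
  -- abbreviations
  set Mm := ((T 1 : R) • (Matrix.fromBlocks (Matrix.of fun _ _ => a + 1) u v W).map
      (Int.cast : ℤ → R) -
    (T (-1) : R) • ((Matrix.fromBlocks (Matrix.of fun _ _ => a + 1) u v W).map
      (Int.cast : ℤ → R))ᵀ) with hMm
  set Mp := ((T 1 : R) • (Matrix.fromBlocks (Matrix.of fun _ _ => a) u v W).map
      (Int.cast : ℤ → R) -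
    (T (-1) : R) • ((Matrix.fromBlocks (Matrix.of fun _ _ => a) u v W).map
      (Int.cast : ℤ → R))ᵀ) with hMp
  have hMp' : Mp = Mm.updateRow (Sum.inl 0) (Mm (Sum.inl 0) + Pi.single (Sum.inl 0) c) := by
    ext i j
    rcases i with i | i
    · have : i = 0 := Subsingleton.elim _ _
      subst this
      rcases j with j | j
      · have : j = 0 := Subsingleton.elim _ _
        subst this
        simp [hMp, hMm, Matrix.updateRow_apply, Pi.single_apply, hc,
          Matrix.fromBlocks_apply₁₁, Matrix.sub_apply, Matrix.smul_apply,
          Matrix.map_apply, Matrix.transpose_apply]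
        congr 2
        ring
      · simp [hMp, hMm, Matrix.updateRow_apply, Pi.single_apply,
          Matrix.fromBlocks_apply₁₂, Matrix.fromBlocks_apply₂₁,
          Matrix.sub_apply, Matrix.smul_apply,
          Matrix.map_apply, Matrix.transpose_apply]
    · rcases j with j | j <;>
        simp [hMp, hMm, Matrix.updateRow_apply, Pi.single_apply,
          Matrix.fromBlocks_apply₂₁, Matrix.fromBlocks_apply₁₂, Matrix.fromBlocks_apply₂₂,
          Matrix.sub_apply, Matrix.smul_apply,
          Matrix.map_apply, Matrix.transpose_apply]
  have hdet : Mp.det = Mm.det + (Mm.updateRow (Sum.inl 0) (Pi.single (Sum.inl 0) c)).det := by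
    rw [hMp', Matrix.det_updateRow_add, Matrix.updateRow_eq_self]
  have hblock : Mm.updateRow (Sum.inl 0) (Pi.single (Sum.inl 0) c) =
      Matrix.fromBlocks (Matrix.of fun _ _ => c) 0
        ((T 1 : R) • v.map (Int.cast : ℤ → R) - (T (-1) : R) • (u.map (Int.cast : ℤ → R))ᵀ)
        ((T 1 : R) • W.map (Int.cast : ℤ → R) - (T (-1) : R) • (W.map (Int.cast : ℤ → R))ᵀ) := by
    ext i j
    rcases i with i | i
    · have : i = 0 := Subsingleton.elim _ _
      subst this
      rcases j with j | j
      · have : j = 0 := Subsingleton.elim _ _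
        subst this
        simp [Pi.single_apply]
      · simp [Pi.single_apply]
    · rcases j with j | j <;>
        simp [hMm, Matrix.updateRow_apply, Matrix.fromBlocks_apply₂₁,
          Matrix.fromBlocks_apply₁₂, Matrix.fromBlocks_apply₂₂,
          Matrix.sub_apply, Matrix.smul_apply, Matrix.map_apply, Matrix.transpose_apply]
  have hfinal : (Mm.updateRow (Sum.inl 0) (Pi.single (Sum.inl 0) c)).det =
      c * nablaPoly W := by
    rw [hblock, Matrix.det_fromBlocks_zero₁₂, nablaPoly]
    congr 1
    simp [Matrix.det_fin_one]
  show Mp.det - Mm.det = c * nablaPoly W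
  rw [hdet, hfinal]; ring
end

section
/- For any polynomial Δ(t) ∈ ℤ[t] with Δ(1) = 1, writing Δ(t) = 1 + a₁(t-1) + ⋯ + a_n(t-1)^n with aᵢ ∈ ℤ, let A be the n×n companion-type matrix with subdiagonal 1's and last column (-a_n, -a_{n-1}, …, -a₁)ᵀ. Then det((t-1)A - I) = ±Δ(t) (equality up to sign, i.e., up to multiplication by a unit). -/
open Matrix Polynomial

private noncomputable def Mmat (n : ℕ) (a : Fin n → ℤ) : Matrix (Fin n) (Fin n) (Polynomial ℤ) :=
  ((X : Polynomial ℤ) - 1) •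
      (Matrix.of fun i j : Fin n =>
        if (j : ℕ) = n - 1 then -a i.rev
        else if (i : ℕ) = (j : ℕ) + 1 then 1 else 0).map Polynomial.C -
    (1 : Matrix (Fin n) (Fin n) (Polynomial ℤ))

private lemma Mmat_apply (n : ℕ) (a : Fin n → ℤ) (i j : Fin n) :
    Mmat n a i j =
      ((X : Polynomial ℤ) - 1) *
        Polynomial.C (if (j : ℕ) = n - 1 then -a i.rev
          else if (i : ℕ) = (j : ℕ) + 1 then 1 else 0) -
      (if i = j then 1 else 0) := by
  simp [Mmat, Matrix.sub_apply, Matrix.smul_apply, Matrix.one_apply, Matrix.map_apply]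

private lemma aux : ∀ (n : ℕ) (a : Fin n → ℤ),
    (Mmat n a).det =
      (-1) ^ n *
        (1 + ∑ i : Fin n, Polynomial.C (a i) * ((X : Polynomial ℤ) - 1) ^ ((i : ℕ) + 1)) := by
  intro n
  induction n with
  | zero => intro a; simp [Matrix.det_isEmpty]
  | succ n ih =>
    intro a
    cases n with
    | zero =>
      rw [Matrix.det_fin_one, Mmat_apply]
      simp [Fin.sum_univ_one]
      ring
    | succ m =>
      rw [Matrix.det_succ_row_zero, Fin.sum_univ_succ]
      -- tail sum: only j = last survives
      have htail : ∀ j : Fin (m + 1), j ≠ Fin.last m →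
          (-1 : Polynomial ℤ) ^ ((j.succ : Fin (m+2)) : ℕ) * Mmat (m+2) a 0 j.succ *
            ((Mmat (m+2) a).submatrix Fin.succ j.succ.succAbove).det = 0 := by
        intro j hj
        have hjv : (j : ℕ) < m := by
          rcases lt_or_eq_of_le (Nat.lt_succ_iff.mp j.isLt) with h | h
          · exact h
          · exact absurd (Fin.ext h) hj
        have hz : Mmat (m+2) a 0 j.succ = 0 := by
          rw [Mmat_apply]
          have h1 : ¬ (((j.succ : Fin (m+2)) : ℕ) = m + 2 - 1) := by
            simp only [Fin.val_succ]; omega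
          have h2 : ¬ ((0 : Fin (m+2)) = j.succ) := (Fin.succ_ne_zero j).symm
          have h3 : ¬ (((0 : Fin (m+2)) : ℕ) = ((j.succ : Fin (m+2)) : ℕ) + 1) := by
            simp
          rw [if_neg h1, if_neg h3, if_neg h2]
          simp
        rw [hz]; ring
      rw [Finset.sum_eq_single (Fin.last m) (fun j _ hj => htail j hj)
        (fun h => absurd (Finset.mem_univ _) h)]
      rw [Fin.succ_last]
      -- minor at 0 equals Mmat (m+1) (a ∘ castSucc)
      have hminor0 : (Mmat (m+2) a).submatrix Fin.succ ((0 : Fin (m+2)).succAbove) =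
          Mmat (m+1) (a ∘ Fin.castSucc) := by
        apply Matrix.ext
        intro i j
        simp only [Matrix.submatrix_apply, Fin.zero_succAbove, Mmat_apply,
          Function.comp_apply]
        have h1 : (((j.succ : Fin (m+2)) : ℕ) = m + 2 - 1) ↔ ((j : ℕ) = m + 1 - 1) := by
          simp only [Fin.val_succ]; omega
        have h2 : (((i.succ : Fin (m+2)) : ℕ) = ((j.succ : Fin (m+2)) : ℕ) + 1) ↔
            ((i : ℕ) = (j : ℕ) + 1) := by
          simp only [Fin.val_succ]; omega
        have h3 : (i.succ = j.succ) ↔ (i = j) := Fin.succ_inj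
        have h4 : i.succ.rev = (i.rev).castSucc := by
          apply Fin.ext
          simp only [Fin.val_rev, Fin.val_succ, Fin.coe_castSucc]
          omega
        rw [h4]
        exact congrArg₂ (fun x y => x - y)
          (congrArg (fun p => ((X : Polynomial ℤ) - 1) * Polynomial.C p)
            (if_congr h1 rfl (if_congr h2 rfl rfl)))
          (if_congr h3 rfl rfl)
      -- minor at last is upper triangular with diagonal (X-1)
      have hminorlast :
          ((Mmat (m+2) a).submatrix Fin.succ ((Fin.last (m+1)).succAbove)).det =
            ((X : Polynomial ℤ) - 1) ^ (m + 1) := by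
        have hup : ∀ i j : Fin (m+1), j < i →
            (Mmat (m+2) a).submatrix Fin.succ ((Fin.last (m+1)).succAbove) i j = 0 := by
          intro i j hij
          simp only [Matrix.submatrix_apply, Fin.succAbove_last, Mmat_apply]
          have h1 : ¬ (((j.castSucc : Fin (m+2)) : ℕ) = m + 2 - 1) := by
            simp only [Fin.coe_castSucc]
            omega
          have h2 : ¬ (((i.succ : Fin (m+2)) : ℕ) = ((j.castSucc : Fin (m+2)) : ℕ) + 1) := by
            simp only [Fin.val_succ, Fin.coe_castSucc]
            omega
          have h3 : ¬ (i.succ = j.castSucc) := by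
            intro h
            have := congrArg Fin.val h
            simp only [Fin.val_succ, Fin.coe_castSucc] at this
            omega
          rw [if_neg h1, if_neg h2, if_neg h3]
          simp
        rw [Matrix.det_of_upperTriangular hup]
        have hdiag : ∀ i : Fin (m+1),
            (Mmat (m+2) a).submatrix Fin.succ ((Fin.last (m+1)).succAbove) i i =
              (X : Polynomial ℤ) - 1 := by
          intro i
          simp only [Matrix.submatrix_apply, Fin.succAbove_last, Mmat_apply]
          have h1 : ¬ (((i.castSucc : Fin (m+2)) : ℕ) = m + 2 - 1) := by
            simp only [Fin.coe_castSucc]; omega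
          have h2 : (((i.succ : Fin (m+2)) : ℕ) = ((i.castSucc : Fin (m+2)) : ℕ) + 1) := by
            simp
          have h3 : ¬ (i.succ = i.castSucc) := by
            intro h
            have := congrArg Fin.val h
            simp at this
          rw [if_neg h1, if_pos h2, if_neg h3]
          simp
        rw [Finset.prod_congr rfl (fun i _ => hdiag i)]
        simp
      rw [hminor0, hminorlast, ih]
      -- compute the entries M 0 0 and M 0 last
      have e00 : Mmat (m+2) a 0 0 = -1 := by
        rw [Mmat_apply]
        have h1 : ¬ (((0 : Fin (m+2)) : ℕ) = m + 2 - 1) := by simp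
        have h3 : ¬ (((0 : Fin (m+2)) : ℕ) = ((0 : Fin (m+2)) : ℕ) + 1) := by simp
        simp [h1, h3]
      have e0l : Mmat (m+2) a 0 (Fin.last (m+1)) =
          ((X : Polynomial ℤ) - 1) * Polynomial.C (-a (Fin.last (m+1))) := by
        rw [Mmat_apply]
        have h1 : ((Fin.last (m+1) : Fin (m+2)) : ℕ) = m + 2 - 1 := by simp
        have h2 : ¬ ((0 : Fin (m+2)) = Fin.last (m+1)) := by
          intro h; have := congrArg Fin.val h; simp at this
        have hrev : (0 : Fin (m+2)).rev = Fin.last (m+1) := by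
          apply Fin.ext; simp [Fin.val_rev]
        simp [h1, h2, hrev]
      rw [e00, e0l]
      rw [Fin.sum_univ_castSucc
        (f := fun i : Fin (m + 2) => Polynomial.C (a i) * ((X : Polynomial ℤ) - 1) ^ ((i : ℕ) + 1))]
      simp only [Fin.val_last, Fin.val_zero, pow_zero, Function.comp_apply, map_neg,
        Fin.coe_castSucc, Nat.succ_eq_add_one]
      ring

/-- Realization of Alexander polynomials via companion matrices: if
`Δ(t) = 1 + a₁(t-1) + ⋯ + a_n(t-1)^n` (with `a i` denoting `a_{i+1}`) and `A`
is the companion-type matrix with subdiagonal `1`'s and last column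
`(-a_n, …, -a₁)ᵀ`, then `det((t-1)A - I) = ±Δ(t)`. -/
theorem companion_realizes_alexander (n : ℕ) (a : Fin n → ℤ) :
    (((X : Polynomial ℤ) - 1) •
        (Matrix.of fun i j : Fin n =>
          if (j : ℕ) = n - 1 then -a i.rev
          else if (i : ℕ) = (j : ℕ) + 1 then 1 else 0).map Polynomial.C -
      (1 : Matrix (Fin n) (Fin n) (Polynomial ℤ))).det =
      (1 + ∑ i : Fin n, Polynomial.C (a i) * ((X : Polynomial ℤ) - 1) ^ ((i : ℕ) + 1)) ∨
    (((X : Polynomial ℤ) - 1) •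
        (Matrix.of fun i j : Fin n =>
          if (j : ℕ) = n - 1 then -a i.rev
          else if (i : ℕ) = (j : ℕ) + 1 then 1 else 0).map Polynomial.C -
      (1 : Matrix (Fin n) (Fin n) (Polynomial ℤ))).det =
      -(1 + ∑ i : Fin n, Polynomial.C (a i) * ((X : Polynomial ℤ) - 1) ^ ((i : ℕ) + 1)) := by
  have h := aux n a
  rw [Mmat] at h
  rcases Nat.even_or_odd n with he | ho
  · left; rw [h, he.neg_one_pow, one_mul]
  · right; rw [h, ho.neg_one_pow, neg_one_mul]
end

section
/- Let β be a nondegenerate skew-symmetric bilinear form on U = ℤ^{2g} with Gram matrix of determinant 1, and let L ⊆ U be a primitive rank-g submodule with β(x,y) = 0 for all x,y ∈ L (i.e., L isotropic). Then L = L^⊥ and there exists a symplectic basis a₁,…,a_g,b₁,…,b_g of U with a₁,…,a_g a basis of L. -/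
open Matrix

section Aux

variable {n : ℕ} {R : Type*} [CommRing R]

/-- `y ↦ v ⬝ᵥ M *ᵥ y` as a linear map. -/
def betaR (M : Matrix (Fin n) (Fin n) R) (v : Fin n → R) : (Fin n → R) →ₗ[R] R where
  toFun w := v ⬝ᵥ M *ᵥ w
  map_add' a b := by simp [Matrix.mulVec_add, dotProduct_add]
  map_smul' c a := by simp [Matrix.mulVec_smul, dotProduct_smul]

@[simp] lemma betaR_apply (M : Matrix (Fin n) (Fin n) R) (v w : Fin n → R) :
    betaR M v w = v ⬝ᵥ M *ᵥ w := rfl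

/-- `v ↦ v ⬝ᵥ M *ᵥ w` as a linear map. -/
def betaL (M : Matrix (Fin n) (Fin n) R) (w : Fin n → R) : (Fin n → R) →ₗ[R] R where
  toFun v := v ⬝ᵥ M *ᵥ w
  map_add' a b := by simp [add_dotProduct]
  map_smul' c a := by simp [smul_dotProduct]

@[simp] lemma betaL_apply (M : Matrix (Fin n) (Fin n) R) (w v : Fin n → R) :
    betaL M w v = v ⬝ᵥ M *ᵥ w := rfl

lemma cast_beta (M : Matrix (Fin n) (Fin n) ℤ) (x y : Fin n → ℤ) :
    ((x ⬝ᵥ M *ᵥ y : ℤ) : ℚ) =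
      (fun i => (x i : ℚ)) ⬝ᵥ (M.map (Int.cast : ℤ → ℚ)) *ᵥ (fun i => (y i : ℚ)) := by
  simp only [dotProduct, Matrix.mulVec, Matrix.map_apply]
  push_cast
  ring_nf

lemma int_den_dvd (q : ℚ) (d : ℤ) (h : (q.den : ℤ) ∣ d) : ∃ z : ℤ, (z : ℚ) = d * q := by
  obtain ⟨e, rfl⟩ := h
  refine ⟨q.num * e, ?_⟩
  push_cast
  rw [← Rat.mul_den_eq_num]
  ring

end Aux

/-- If `β` is a nondegenerate skew-symmetric form on `ℤ^{2g}` with Gram matrix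
of determinant `1`, and `L` is a primitive rank-`g` isotropic submodule, then
`L = L^⊥` and there is a symplectic basis `a₁,…,a_g,b₁,…,b_g` of `ℤ^{2g}`
such that `a₁,…,a_g` is a basis of `L`. -/
theorem isotropic_primitive_extends_to_symplectic_basis (g : ℕ)
    (C : Matrix (Fin (2 * g)) (Fin (2 * g)) ℤ)
    (hskew : Cᵀ = -C) (hdet : C.det = 1)
    (L : Submodule ℤ (Fin (2 * g) → ℤ))
    (hprim : ∀ (x : Fin (2 * g) → ℤ) (n : ℤ), n ≠ 0 → n • x ∈ L → x ∈ L)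
    (hrank : Nonempty (Module.Basis (Fin g) ℤ L))
    (hiso : ∀ x ∈ L, ∀ y ∈ L, dotProduct x (C.mulVec y) = 0) :
    (∀ y : Fin (2 * g) → ℤ,
        (∀ x ∈ L, dotProduct x (C.mulVec y) = 0) ↔ y ∈ L) ∧
    ∃ b : Module.Basis (Fin g ⊕ Fin g) ℤ (Fin (2 * g) → ℤ),
      (∀ i, b (Sum.inl i) ∈ L) ∧
      Submodule.span ℤ (Set.range fun i => b (Sum.inl i)) = L ∧
      (∀ i j, dotProduct (b (Sum.inl i)) (C.mulVec (b (Sum.inr j))) =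
        if i = j then 1 else 0) ∧
      (∀ i j, dotProduct (b (Sum.inl i)) (C.mulVec (b (Sum.inl j))) = 0) ∧
      (∀ i j, dotProduct (b (Sum.inr i)) (C.mulVec (b (Sum.inr j))) = 0) := by
  obtain ⟨bL⟩ := hrank
  -- the images of the basis of `L`
  set a : Fin g → (Fin (2 * g) → ℤ) := fun i => (bL i : (Fin (2 * g) → ℤ)) with ha
  have haL : ∀ i, a i ∈ L := fun i => (bL i).2
  have hspan_a : Submodule.span ℤ (Set.range a) = L := by
    have h1 : Set.range a = L.subtype '' Set.range bL := by
      rw [← Set.range_comp]; rfl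
    rw [h1, ← Submodule.map_span, bL.span_eq, Submodule.map_subtype_top]
  -- skew-symmetry facts
  have hskew' : ∀ x y : (Fin (2 * g) → ℤ), y ⬝ᵥ C *ᵥ x = -(x ⬝ᵥ C *ᵥ y) := by
    intro x y
    rw [Matrix.dotProduct_mulVec x C y, ← Matrix.mulVec_transpose, hskew,
      Matrix.neg_mulVec, neg_dotProduct, dotProduct_comm]
    ring
  have hself : ∀ x : (Fin (2 * g) → ℤ), x ⬝ᵥ C *ᵥ x = 0 := by
    intro x; have := hskew' x x; omega
  -- the quotient is free, hence projective, giving a retraction onto L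
  haveI : NoZeroSMulDivisors ℤ ((Fin (2 * g) → ℤ) ⧸ L) := by
    constructor
    intro c x h
    rcases Submodule.Quotient.mk_surjective L x with ⟨y, rfl⟩
    by_cases hc : c = 0
    · exact Or.inl hc
    · refine Or.inr ?_
      rw [← Submodule.Quotient.mk_smul, Submodule.Quotient.mk_eq_zero] at h
      rw [Submodule.Quotient.mk_eq_zero]
      exact hprim y c hc h
  obtain ⟨s, hs⟩ := Module.projective_lifting_property L.mkQ LinearMap.id
    (Submodule.mkQ_surjective L)
  set π : (Fin (2 * g) → ℤ) →ₗ[ℤ] (Fin (2 * g) → ℤ) := LinearMap.id - s ∘ₗ L.mkQ with hπ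
  have hπmem : ∀ x, π x ∈ L := by
    intro x
    have h2 := LinearMap.congr_fun hs (L.mkQ x)
    simp only [LinearMap.coe_comp, Function.comp_apply, LinearMap.id_apply,
      Submodule.mkQ_apply] at h2
    rw [← Submodule.Quotient.mk_eq_zero (p := L)]
    simp [hπ, Submodule.Quotient.mk_sub, h2]
  have hπid : ∀ x ∈ L, π x = x := by
    intro x hx
    have : L.mkQ x = 0 := by simpa [Submodule.mkQ_apply, Submodule.Quotient.mk_eq_zero] using hx
    simp [hπ, this]
  -- dual functionals extending the coordinate functionals of L
  set Φ : Fin g → ((Fin (2 * g) → ℤ) →ₗ[ℤ] ℤ) := fun j => (bL.coord j) ∘ₗ (π.codRestrict L hπmem) with hΦ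
  have hΦa : ∀ j i, Φ j (a i) = if i = j then 1 else 0 := by
    intro j i
    have h3 : π.codRestrict L hπmem (a i) = bL i := by
      apply Subtype.ext
      simpa using hπid (a i) (haL i)
    simp [hΦ, h3, Module.Basis.coord_apply, Finsupp.single_apply]
  -- vectors representing the functionals
  set w : Fin g → (Fin (2 * g) → ℤ) := fun j k => Φ j (fun l => if k = l then 1 else 0) with hwdef
  have hw : ∀ j (x : (Fin (2 * g) → ℤ)), x ⬝ᵥ w j = Φ j x := by
    intro j x
    rw [LinearMap.pi_apply_eq_sum_univ (Φ j) x]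
    simp [dotProduct, hwdef, smul_eq_mul]
  have hu : IsUnit C.det := by rw [hdet]; exact isUnit_one
  set b' : Fin g → (Fin (2 * g) → ℤ) := fun j => C⁻¹ *ᵥ w j with hb'
  have hab' : ∀ i j, a i ⬝ᵥ C *ᵥ b' j = if i = j then 1 else 0 := by
    intro i j
    rw [hb', Matrix.mulVec_mulVec, Matrix.mul_nonsing_inv C hu, Matrix.one_mulVec, hw, hΦa]
  -- adjust b' to make it isotropic
  set m : Fin g → Fin g → ℤ := fun i j => b' i ⬝ᵥ C *ᵥ b' j with hm
  set cc : Fin g → Fin g → ℤ := fun i j => if i < j then -(m i j) else 0 with hcc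
  set bvec : Fin g → (Fin (2 * g) → ℤ) := fun j => b' j + ∑ k, cc j k • a k with hbvec
  have haa : ∀ i j, a i ⬝ᵥ C *ᵥ a j = 0 := fun i j => hiso _ (haL i) _ (haL j)
  have hab : ∀ i j, a i ⬝ᵥ C *ᵥ bvec j = if i = j then 1 else 0 := by
    intro i j
    have h4 : (betaR C (a i)) (bvec j) = a i ⬝ᵥ C *ᵥ bvec j := rfl
    rw [← h4, hbvec]
    simp only [map_add, map_sum, _root_.map_smul, betaR_apply, smul_eq_mul]
    simp [haa, hab' i j]
  have hb'a : ∀ i j, b' i ⬝ᵥ C *ᵥ a j = -(if j = i then 1 else 0) := by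
    intro i j; rw [hskew', hab']
  have hbb : ∀ i j, bvec i ⬝ᵥ C *ᵥ bvec j = 0 := by
    intro i j
    have e1 : bvec i ⬝ᵥ C *ᵥ bvec j
        = (b' i ⬝ᵥ C *ᵥ bvec j) + ∑ k, cc i k * (a k ⬝ᵥ C *ᵥ bvec j) := by
      have h4 : (betaL C (bvec j)) (bvec i) = bvec i ⬝ᵥ C *ᵥ bvec j := rfl
      rw [← h4, hbvec]
      simp only [map_add, map_sum, _root_.map_smul, betaL_apply, smul_eq_mul]
    have e2 : b' i ⬝ᵥ C *ᵥ bvec j = m i j - cc j i := by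
      have h4 : (betaR C (b' i)) (bvec j) = b' i ⬝ᵥ C *ᵥ bvec j := rfl
      rw [← h4, hbvec]
      simp only [map_add, map_sum, _root_.map_smul, betaR_apply, smul_eq_mul]
      simp [hb'a, ← hm, mul_ite, Finset.sum_ite_eq, sub_eq_add_neg]
      rfl
    rw [e1, e2]
    simp only [hab, mul_ite, mul_one, mul_zero]
    rw [Finset.sum_ite_eq' Finset.univ j (fun k => cc i k)]
    simp only [Finset.mem_univ, if_true]
    rcases lt_trichotomy i j with h | h | h
    · have h5 : ¬ j < i := by omega
      simp [hcc, h, h5]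
    · subst h
      have h6 : m i i = 0 := hself (b' i)
      simp [hcc, h6]
    · have h5 : ¬ i < j := by omega
      have h7 : m j i = -(m i j) := hskew' (b' i) (b' j)
      simp [hcc, h, h5, h7]
  -- pass to ℚ to show L^⊥ ⊆ L
  set Cq : Matrix (Fin (2 * g)) (Fin (2 * g)) ℚ := C.map (Int.cast : ℤ → ℚ) with hCq
  set castv : (Fin (2 * g) → ℤ) → (Fin (2 * g) → ℚ) := fun x i => (x i : ℚ) with hcastv
  have hcast : ∀ x y : (Fin (2 * g) → ℤ), ((x ⬝ᵥ C *ᵥ y : ℤ) : ℚ) = castv x ⬝ᵥ Cq *ᵥ castv y :=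
    fun x y => cast_beta C x y
  set cq : (Fin g ⊕ Fin g) → (Fin (2 * g) → ℚ) :=
    Sum.elim (fun i => castv (a i)) (fun i => castv (b' i)) with hcq
  have hq1 : ∀ i j, castv (a i) ⬝ᵥ Cq *ᵥ castv (a j) = 0 := by
    intro i j; rw [← hcast, haa]; norm_num
  have hq2 : ∀ i j, castv (a i) ⬝ᵥ Cq *ᵥ castv (b' j) = if i = j then 1 else 0 := by
    intro i j; rw [← hcast, hab']; split <;> norm_num
  have hq3 : ∀ i j, castv (b' i) ⬝ᵥ Cq *ᵥ castv (a j) = -(if j = i then 1 else 0) := by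
    intro i j; rw [← hcast, hb'a]; split <;> norm_num
  have hli : LinearIndependent ℚ cq := by
    rw [Fintype.linearIndependent_iff]
    intro p hp
    have hzr : ∀ j, p (Sum.inr j) = 0 := by
      intro j
      have h0 : (betaR Cq (castv (a j))) (∑ s, p s • cq s) = 0 := by rw [hp]; simp
      simp only [map_sum, _root_.map_smul, betaR_apply, smul_eq_mul] at h0
      rw [Fintype.sum_sum_type] at h0
      simpa [hcq, hq1, hq2, mul_ite, Finset.sum_ite_eq] using h0
    rintro (j | j)
    · have h0 : (betaR Cq (castv (b' j))) (∑ s, p s • cq s) = 0 := by rw [hp]; simp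
      simp only [map_sum, _root_.map_smul, betaR_apply, smul_eq_mul] at h0
      rw [Fintype.sum_sum_type] at h0
      simpa [hcq, hq3, hzr, mul_ite, Finset.sum_ite_eq] using h0
    · exact hzr j
  have hcard : Fintype.card (Fin g ⊕ Fin g) = Module.finrank ℚ (Fin (2 * g) → ℚ) := by
    simp [two_mul]
  have hstop := hli.span_eq_top_of_card_eq_finrank' hcard
  have hperp : ∀ y : (Fin (2 * g) → ℤ), (∀ i, a i ⬝ᵥ C *ᵥ y = 0) → y ∈ L := by
    intro y hy
    have hymem : castv y ∈ Submodule.span ℚ (Set.range cq) := by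
      rw [hstop]; exact Submodule.mem_top
    obtain ⟨p, hp⟩ := (Submodule.mem_span_range_iff_exists_fun ℚ).mp hymem
    have hpz : ∀ j, p (Sum.inr j) = 0 := by
      intro j
      have h0 : (betaR Cq (castv (a j))) (∑ s, p s • cq s)
          = (betaR Cq (castv (a j))) (castv y) := by rw [hp]
      simp only [map_sum, _root_.map_smul, betaR_apply, smul_eq_mul] at h0
      rw [Fintype.sum_sum_type] at h0
      have hy' : castv (a j) ⬝ᵥ Cq *ᵥ castv y = 0 := by rw [← hcast, hy j]; norm_num
      simpa [hcq, hq1, hq2, mul_ite, Finset.sum_ite_eq, hy'] using h0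
    have hyq : castv y = ∑ i, p (Sum.inl i) • castv (a i) := by
      rw [← hp, Fintype.sum_sum_type]
      simp [hpz, hcq]
    set d : ℤ := ∏ i, ((p (Sum.inl i)).den : ℤ) with hd
    have hdne : d ≠ 0 := by
      rw [hd, Finset.prod_ne_zero_iff]
      intro i _
      exact_mod_cast (p (Sum.inl i)).den_nz
    have hzex : ∀ i, ∃ z : ℤ, (z : ℚ) = d * p (Sum.inl i) := by
      intro i
      exact int_den_dvd _ _ (Finset.dvd_prod_of_mem _ (Finset.mem_univ i))
    choose z hzz using hzex
    have key : d • y = ∑ i, z i • a i := by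
      funext k
      have hcq1 : ((d • y) k : ℚ) = ((∑ i, z i • a i) k : ℚ) := by
        have h5 : (castv y) k = ∑ i, p (Sum.inl i) * (castv (a i)) k := by
          rw [hyq]; simp
        simp only [Pi.smul_apply, smul_eq_mul, Finset.sum_apply]
        push_cast
        calc (d : ℚ) * (y k : ℚ) = (d : ℚ) * ∑ i, p (Sum.inl i) * (a i k : ℚ) := by
              rw [← h5]
          _ = ∑ i, ((d : ℚ) * p (Sum.inl i)) * (a i k : ℚ) := by
              rw [Finset.mul_sum]; exact Finset.sum_congr rfl fun i _ => by ring
          _ = ∑ i, (z i : ℚ) * (a i k : ℚ) := by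
              exact Finset.sum_congr rfl fun i _ => by rw [hzz i]
      exact_mod_cast hcq1
    have hmem : d • y ∈ L := by
      rw [key]
      exact Submodule.sum_mem _ fun i _ => Submodule.smul_mem _ _ (haL i)
    exact hprim y d hdne hmem
  -- the integral basis
  set cvec : (Fin g ⊕ Fin g) → (Fin (2 * g) → ℤ) := Sum.elim a bvec with hcvec
  have hba : ∀ i j, bvec i ⬝ᵥ C *ᵥ a j = -(if j = i then 1 else 0) := by
    intro i j; rw [hskew', hab]
  have hliZ : LinearIndependent ℤ cvec := by
    rw [Fintype.linearIndependent_iff]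
    intro q hq
    have hz1 : ∀ j, q (Sum.inr j) = 0 := by
      intro j
      have h0 : (betaR C (a j)) (∑ s, q s • cvec s) = 0 := by rw [hq]; simp
      simp only [map_sum, _root_.map_smul, betaR_apply, smul_eq_mul] at h0
      rw [Fintype.sum_sum_type] at h0
      simpa [hcvec, haa, hab, mul_ite, Finset.sum_ite_eq] using h0
    rintro (j | j)
    · have h0 : (betaR C (bvec j)) (∑ s, q s • cvec s) = 0 := by rw [hq]; simp
      simp only [map_sum, _root_.map_smul, betaR_apply, smul_eq_mul] at h0
      rw [Fintype.sum_sum_type] at h0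
      simpa [hcvec, hba, hbb, hz1, mul_ite, Finset.sum_ite_eq] using h0
    · exact hz1 j
  have hspan_top : Submodule.span ℤ (Set.range cvec) = ⊤ := by
    rw [Submodule.eq_top_iff']
    intro u
    set u' : (Fin (2 * g) → ℤ) := u - ∑ i, (a i ⬝ᵥ C *ᵥ u) • bvec i with hu'
    have hu'L : u' ∈ L := by
      apply hperp
      intro j
      have h0 : (betaR C (a j)) u' = 0 := by
        rw [hu']
        simp only [map_sub, map_sum, _root_.map_smul, betaR_apply, smul_eq_mul]
        simp [hab, mul_ite, Finset.sum_ite_eq']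
      simpa using h0
    have hsub : Set.range a ⊆ Set.range cvec := by
      rintro _ ⟨i, rfl⟩; exact ⟨Sum.inl i, rfl⟩
    have h1 : u' ∈ Submodule.span ℤ (Set.range cvec) := by
      rw [← hspan_a] at hu'L
      exact Submodule.span_mono hsub hu'L
    have h2 : (∑ i, (a i ⬝ᵥ C *ᵥ u) • bvec i) ∈ Submodule.span ℤ (Set.range cvec) :=
      Submodule.sum_mem _ fun i _ =>
        Submodule.smul_mem _ _ (Submodule.subset_span ⟨Sum.inr i, rfl⟩)
    have h3 : u = u' + ∑ i, (a i ⬝ᵥ C *ᵥ u) • bvec i := by rw [hu']; abel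
    rw [h3]
    exact Submodule.add_mem _ h1 h2
  refine ⟨?_, Module.Basis.mk hliZ hspan_top.ge, ?_, ?_, ?_, ?_, ?_⟩
  · intro y
    constructor
    · intro h; exact hperp y fun i => h (a i) (haL i)
    · intro hy x hx; exact hiso x hx y hy
  · intro i
    rw [Module.Basis.mk_apply]
    exact haL i
  · have h6 : (fun i => (Module.Basis.mk hliZ hspan_top.ge) (Sum.inl i)) = a := by
      funext i; rw [Module.Basis.mk_apply]; rfl
    rw [h6]; exact hspan_a
  · intro i j
    rw [Module.Basis.mk_apply, Module.Basis.mk_apply]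
    exact hab i j
  · intro i j
    rw [Module.Basis.mk_apply, Module.Basis.mk_apply]
    exact haa i j
  · intro i j
    rw [Module.Basis.mk_apply, Module.Basis.mk_apply]
    exact hbb i j
end

section
/- Define a pair (V⁺,V⁻) of 2g×2g integer matrices to be null-concordant if V⁺ and V⁻ are simultaneously unimodularly congruent to matrices with zero upper-left g×g block. If (V⁺,V⁻) is null-concordant and ω ≠ 1 is a unit complex number with det((1-ω)V^± + (1-ω̄)(V^±)ᵀ) ≠ 0, then sig((1-ω)V^± + (1-ω̄)(V^±)ᵀ) = 0. -/
open Matrix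

open Submodule Module


variable {m : ℕ}

/-- Coordinate subspace spanned by standard basis vectors indexed by `s`. -/
noncomputable def coordSpan (s : Set (Fin m)) : Submodule ℂ (Fin m → ℂ) :=
  Submodule.span ℂ (Set.range fun i : s => Pi.single (i : Fin m) (1 : ℂ))

lemma coordSpan_apply_eq_zero {s : Set (Fin m)} {x : Fin m → ℂ}
    (hx : x ∈ coordSpan s) {i : Fin m} (hi : i ∉ s) : x i = 0 := by
  induction hx using Submodule.span_induction with
  | mem y hy =>
    obtain ⟨j, rfl⟩ := hy
    exact Pi.single_eq_of_ne (by rintro rfl; exact hi j.2) 1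
  | zero => rfl
  | add y z _ _ hy hz => simp [hy, hz]
  | smul a y _ hy => simp [hy]

lemma finrank_coordSpan (s : Set (Fin m)) [DecidablePred (· ∈ s)] :
    finrank ℂ (coordSpan s) = Fintype.card s := by
  refine finrank_span_eq_card ?_
  have h1 : LinearIndependent ℂ (fun i : Fin m => Pi.single i (1 : ℂ)) := by
    have h0 := (Pi.basisFun ℂ (Fin m)).linearIndependent
    have he : ⇑(Pi.basisFun ℂ (Fin m)) = fun i => Pi.single i (1 : ℂ) :=
      funext fun i => Pi.basisFun_apply ℂ (Fin m) i
    rwa [he] at h0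
  exact h1.comp Subtype.val Subtype.val_injective

lemma quad_zero (d : Fin m → ℝ) {u : Fin m → ℂ}
    (hsupp : ∀ i, u i ≠ 0 → 0 < d i)
    (h : star u ⬝ᵥ ((Matrix.diagonal fun i => (d i : ℂ)) *ᵥ u) = 0) : u = 0 := by
  have term : ∀ i, (star u) i * ((fun i => (d i : ℂ)) i * u i)
      = ((d i * Complex.normSq (u i) : ℝ) : ℂ) := by
    intro i
    calc (star u) i * ((fun i => (d i : ℂ)) i * u i)
        = (d i : ℂ) * ((starRingEnd ℂ) (u i) * u i) := by
          simp only [Pi.star_apply, RCLike.star_def]; ring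
      _ = (d i : ℂ) * Complex.normSq (u i) := by
          rw [mul_comm ((starRingEnd ℂ) (u i)), Complex.mul_conj]
      _ = _ := by push_cast; ring
  have hc : ((∑ i, d i * Complex.normSq (u i) : ℝ) : ℂ) = 0 := by
    rw [← h]
    unfold dotProduct
    simp only [Matrix.mulVec_diagonal]
    rw [Complex.ofReal_sum]
    exact (Finset.sum_congr rfl fun i _ => term i).symm
  have hre : ∑ i, d i * Complex.normSq (u i) = 0 := Complex.ofReal_eq_zero.mp hc
  have hnn : ∀ i ∈ Finset.univ, (0:ℝ) ≤ d i * Complex.normSq (u i) := by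
    intro i _
    by_cases hu : u i = 0
    · simp [hu]
    · exact mul_nonneg (hsupp i hu).le (Complex.normSq_nonneg _)
  have hz := (Finset.sum_eq_zero_iff_of_nonneg hnn).mp hre
  funext i
  by_contra hne
  have h1 : 0 < d i * Complex.normSq (u i) :=
    mul_pos (hsupp i hne) (Complex.normSq_pos.mpr hne)
  exact h1.ne' (hz i (Finset.mem_univ i))

lemma matSig_eq_zero_of_zero_block {g : ℕ}
    {M : Matrix (Fin (2 * g)) (Fin (2 * g)) ℂ} (hM : M.IsHermitian)
    (hd : M.det ≠ 0) (Q : Matrix (Fin (2 * g)) (Fin (2 * g)) ℂ)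
    (hQ : IsUnit Q.det)
    (hz : ∀ i j : Fin (2 * g), (i : ℕ) < g → (j : ℕ) < g → (Q * M * Qᴴ) i j = 0) :
    matSig hM = 0 := by
  classical
  set d := hM.eigenvalues with hdd
  set U : Matrix (Fin (2 * g)) (Fin (2 * g)) ℂ :=
    ((Matrix.IsHermitian.eigenvectorUnitary hM : Matrix.unitaryGroup (Fin (2 * g)) ℂ) : Matrix (Fin (2 * g)) (Fin (2 * g)) ℂ) with hUdef
  have hUU : U * star U = 1 :=
    (Matrix.mem_unitaryGroup_iff).mp (Matrix.IsHermitian.eigenvectorUnitary hM).2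
  have hUdet : IsUnit U.det := by
    apply IsUnit.of_mul_eq_one (star U).det
    rw [← Matrix.det_mul, hUU, Matrix.det_one]
  set S := Q * U with hSdef
  have hSdet : IsUnit S.det := by rw [hSdef, Matrix.det_mul]; exact hQ.mul hUdet
  letI : Invertible S := S.invertibleOfIsUnitDet hSdet
  letI : Invertible Sᴴ := Matrix.invertibleConjTranspose S
  set D : Matrix (Fin (2 * g)) (Fin (2 * g)) ℂ :=
    Matrix.diagonal (fun i => (d i : ℂ)) with hDdef
  have hZ : Q * M * Qᴴ = S * D * Sᴴ := by
    have hspec := hM.spectral_theorem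
    have hDeq : Matrix.diagonal (RCLike.ofReal ∘ d) = D := rfl
    rw [hspec, hDeq, Unitary.conjStarAlgAut_apply, hSdef, Matrix.conjTranspose_mul, Matrix.star_eq_conjTranspose]
    simp only [Matrix.mul_assoc]
    rfl
  have hbil : ∀ x y : Fin (2 * g) → ℂ,
      star (Sᴴ *ᵥ x) ⬝ᵥ (D *ᵥ (Sᴴ *ᵥ y)) = star x ⬝ᵥ ((Q * M * Qᴴ) *ᵥ y) := by
    intro x y
    rw [hZ, Matrix.star_mulVec, Matrix.conjTranspose_conjTranspose,
      ← Matrix.dotProduct_mulVec, Matrix.mulVec_mulVec, Matrix.mulVec_mulVec]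
  set W : Submodule ℂ (Fin (2 * g) → ℂ) := coordSpan {j : Fin (2 * g) | (j : ℕ) < g}
  have hWiso : ∀ x ∈ W, ∀ y ∈ W, star x ⬝ᵥ ((Q * M * Qᴴ) *ᵥ y) = 0 := by
    intro x hx y hy
    unfold dotProduct
    apply Finset.sum_eq_zero
    intro i _
    by_cases hig : (i : ℕ) < g
    · have h2 : ∑ j, (Q * M * Qᴴ) i j * y j = 0 := by
        apply Finset.sum_eq_zero
        intro j _
        by_cases hjg : (j : ℕ) < g
        · rw [hz i j hig hjg, zero_mul]
        · rw [coordSpan_apply_eq_zero hy hjg, mul_zero]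
      show (star x) i * ((Q * M * Qᴴ) *ᵥ y) i = 0
      rw [show ((Q * M * Qᴴ) *ᵥ y) i = ∑ j, (Q * M * Qᴴ) i j * y j from rfl, h2, mul_zero]
    · show (star x) i * ((Q * M * Qᴴ) *ᵥ y) i = 0
      rw [Pi.star_apply, coordSpan_apply_eq_zero hx hig, star_zero, zero_mul]
  set e : (Fin (2 * g) → ℂ) ≃ₗ[ℂ] (Fin (2 * g) → ℂ) := Matrix.toLinearEquiv' Sᴴ ‹_› with hedef
  have he : ∀ x, e x = Sᴴ *ᵥ x := fun x => rfl
  set W' : Submodule ℂ (Fin (2 * g) → ℂ) := W.map (e : _ →ₗ[ℂ] _) with hW'def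
  -- dimensions
  have hcardg : Fintype.card {j : Fin (2 * g) // (j : ℕ) < g} = g := by
    refine Fintype.card_congr ⟨fun j => ⟨j.1.1, j.2⟩,
      fun k => ⟨⟨k.1, lt_of_lt_of_le k.2 (by omega)⟩, k.2⟩, fun j => rfl, fun k => rfl⟩
      |>.trans (Fintype.card_fin g)
  have hrW : finrank ℂ W = g := by
    rw [show W = coordSpan {j : Fin (2 * g) | (j : ℕ) < g} from rfl, finrank_coordSpan]
    exact hcardg
  have hrW' : finrank ℂ W' = g := by
    rw [hW'def, LinearEquiv.finrank_map_eq]; exact hrW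
  have hdim : finrank ℂ (Fin (2 * g) → ℂ) = 2 * g := by
    rw [Module.finrank_fintype_fun_eq_card, Fintype.card_fin]
  -- positive part
  have hquadW : ∀ x ∈ W, star (Sᴴ *ᵥ x) ⬝ᵥ (D *ᵥ (Sᴴ *ᵥ x)) = 0 := by
    intro x hx; rw [hbil]; exact hWiso x hx x hx
  have hdisjp : Disjoint W' (coordSpan {i : Fin (2 * g) | 0 < d i}) := by
    rw [Submodule.disjoint_def]
    rintro u hu hup
    obtain ⟨x, hxW, rfl⟩ := Submodule.mem_map.mp hu
    simp only [LinearEquiv.coe_coe] at hup ⊢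
    rw [he] at hup ⊢
    apply quad_zero d
    · intro i hne
      by_contra hnd
      exact hne (coordSpan_apply_eq_zero hup hnd)
    · exact hquadW x hxW
  have hdisjm : Disjoint W' (coordSpan {i : Fin (2 * g) | d i < 0}) := by
    rw [Submodule.disjoint_def]
    rintro u hu hup
    obtain ⟨x, hxW, rfl⟩ := Submodule.mem_map.mp hu
    simp only [LinearEquiv.coe_coe] at hup ⊢
    rw [he] at hup ⊢
    apply quad_zero (fun i => -d i)
    · intro i hne
      have : d i < 0 := by
        by_contra hnd
        exact hne (coordSpan_apply_eq_zero hup hnd)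
      simpa using this
    · have : Matrix.diagonal (fun i => ((- d i : ℝ) : ℂ)) = -D := by
        rw [hDdef]
        ext i j
        by_cases h : i = j <;> simp [Matrix.diagonal_apply, h]
      rw [this, Matrix.neg_mulVec, dotProduct_neg, hquadW x hxW, neg_zero]
  have hlep : g + (Finset.univ.filter (fun i => 0 < d i)).card ≤ 2 * g := by
    have h := Submodule.finrank_add_finrank_le_of_disjoint hdisjp
    rw [hrW', finrank_coordSpan, hdim, Fintype.card_subtype] at h
    simpa only [Set.mem_setOf_eq] using h
  have hlem : g + (Finset.univ.filter (fun i => d i < 0)).card ≤ 2 * g := by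
    have h := Submodule.finrank_add_finrank_le_of_disjoint hdisjm
    rw [hrW', finrank_coordSpan, hdim, Fintype.card_subtype] at h
    simpa only [Set.mem_setOf_eq] using h
  -- all eigenvalues nonzero
  have hall : ∀ i, d i ≠ 0 := by
    intro i hi0
    apply hd
    rw [hM.det_eq_prod_eigenvalues]
    refine Finset.prod_eq_zero (Finset.mem_univ i) ?_
    rw [← hdd, hi0]; simp
  have hsum : (Finset.univ.filter (fun i => 0 < d i)).card
      + (Finset.univ.filter (fun i => d i < 0)).card = 2 * g := by
    have h := Finset.card_filter_add_card_filter_not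
      (s := (Finset.univ : Finset (Fin (2 * g)))) (p := fun i => 0 < d i)
    have heq : Finset.univ.filter (fun i => ¬ 0 < d i)
        = Finset.univ.filter (fun i => d i < 0) := by
      apply Finset.filter_congr
      intro i _
      constructor
      · intro hle; exact lt_of_le_of_ne (not_lt.mp hle) (hall i)
      · intro hlt; exact not_lt.mpr hlt.le
    rw [heq] at h
    rw [h, Finset.card_univ, Fintype.card_fin]
  have hp : (Finset.univ.filter (fun i => 0 < d i)).card = g := by omega
  have hn : (Finset.univ.filter (fun i => d i < 0)).card = g := by omega
  show ((Finset.univ.filter (fun i => 0 < hM.eigenvalues i)).card : ℤ) -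
    ((Finset.univ.filter (fun i => hM.eigenvalues i < 0)).card : ℤ) = 0
  rw [← hdd, hp, hn]; ring


lemma block_zero {g : ℕ} (V P : Matrix (Fin (2 * g)) (Fin (2 * g)) ℤ)
    (hPz : ∀ i j : Fin (2 * g), (i : ℕ) < g → (j : ℕ) < g → (P * V * Pᵀ) i j = 0) (ω : ℂ) :
    ∀ i j : Fin (2 * g), (i : ℕ) < g → (j : ℕ) < g →
      ((P.map (Int.cast : ℤ → ℂ)) *
        ((1 - ω) • V.map (Int.cast : ℤ → ℂ) +
          (1 - (starRingEnd ℂ) ω) • (V.map (Int.cast : ℤ → ℂ))ᵀ) *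
        (P.map (Int.cast : ℤ → ℂ))ᴴ) i j = 0 := by
  intro i j hi hj
  set Q := P.map (Int.cast : ℤ → ℂ) with hQdef
  set A := V.map (Int.cast : ℤ → ℂ) with hAdef
  have hQH : Qᴴ = Qᵀ := by
    ext a b
    simp [hQdef, Matrix.conjTranspose_apply, Matrix.transpose_apply, Matrix.map_apply]
  have hB : Q * A * Qᵀ = (P * V * Pᵀ).map (Int.cast : ℤ → ℂ) := by
    ext a b
    push_cast [Matrix.mul_apply, Matrix.map_apply, Matrix.transpose_apply, hQdef, hAdef,
      Finset.sum_mul, Finset.mul_sum]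
    ring_nf
  have hBT : Q * Aᵀ * Qᵀ = (Q * A * Qᵀ)ᵀ := by
    rw [Matrix.transpose_mul, Matrix.transpose_mul, Matrix.transpose_transpose,
      Matrix.mul_assoc]
  have hsplit : Q * ((1 - ω) • A + (1 - (starRingEnd ℂ) ω) • Aᵀ) * Qᵀ
      = (1 - ω) • (Q * A * Qᵀ) + (1 - (starRingEnd ℂ) ω) • (Q * Aᵀ * Qᵀ) := by
    rw [Matrix.mul_add, Matrix.add_mul, Matrix.mul_smul, Matrix.smul_mul,
      Matrix.mul_smul, Matrix.smul_mul]
  rw [hQH, hsplit, Matrix.add_apply, Matrix.smul_apply, Matrix.smul_apply, hBT,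
    Matrix.transpose_apply, hB]
  simp [Matrix.map_apply, hPz i j hi hj, hPz j i hj hi]

/-- If the pair `(V⁺, V⁻)` of `2g × 2g` integer matrices is null-concordant
(simultaneously unimodularly congruent to matrices with vanishing upper-left
`g × g` block), and `ω ≠ 1` is a unit complex number such that the Hermitian
forms `(1-ω)V^± + (1-ω̄)(V^±)ᵀ` are nonsingular, then their signatures
vanish. -/
theorem omega_signature_vanishes_of_null_concordant (g : ℕ)
    (Vp Vm : Matrix (Fin (2 * g)) (Fin (2 * g)) ℤ)
    (hnc : ∃ P : Matrix (Fin (2 * g)) (Fin (2 * g)) ℤ,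
      (P.det = 1 ∨ P.det = -1) ∧
      (∀ i j : Fin (2 * g), (i : ℕ) < g → (j : ℕ) < g → (P * Vp * Pᵀ) i j = 0) ∧
      (∀ i j : Fin (2 * g), (i : ℕ) < g → (j : ℕ) < g → (P * Vm * Pᵀ) i j = 0))
    (ω : ℂ) (hω : ‖ω‖ = 1) (hω1 : ω ≠ 1)
    (hMp : ((1 - ω) • Vp.map (Int.cast : ℤ → ℂ) +
        (1 - (starRingEnd ℂ) ω) • (Vp.map (Int.cast : ℤ → ℂ))ᵀ).IsHermitian)
    (hdp : ((1 - ω) • Vp.map (Int.cast : ℤ → ℂ) +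
        (1 - (starRingEnd ℂ) ω) • (Vp.map (Int.cast : ℤ → ℂ))ᵀ).det ≠ 0)
    (hMm : ((1 - ω) • Vm.map (Int.cast : ℤ → ℂ) +
        (1 - (starRingEnd ℂ) ω) • (Vm.map (Int.cast : ℤ → ℂ))ᵀ).IsHermitian)
    (hdm : ((1 - ω) • Vm.map (Int.cast : ℤ → ℂ) +
        (1 - (starRingEnd ℂ) ω) • (Vm.map (Int.cast : ℤ → ℂ))ᵀ).det ≠ 0) :
    matSig hMp = 0 ∧ matSig hMm = 0 := by
  obtain ⟨P, hPdet, hzp, hzm⟩ := hnc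
  have hQdet : IsUnit (P.map (Int.cast : ℤ → ℂ)).det := by
    have h : (P.map (Int.cast : ℤ → ℂ)).det = ((P.det : ℤ) : ℂ) :=
      (RingHom.map_det (Int.castRingHom ℂ) P).symm
    rcases hPdet with h1 | h1 <;> rw [h, h1]
    · simp
    · simpa using isUnit_one.neg
  exact ⟨matSig_eq_zero_of_zero_block hMp hdp _ hQdet (block_zero Vp P hzp ω),
    matSig_eq_zero_of_zero_block hMm hdm _ hQdet (block_zero Vm P hzm ω)⟩
end

section
/- If (V⁺,V⁻) is a null-concordant pair of 2g×2g integer matrices, then each of the symmetrized directed Alexander polynomials ∇^±(t) = det(t V^± - (V^±)ᵀ)·t^{-g} ∈ ℤ[t,t^{-1}] factors as f^±(t)·f^±(t^{-1}) for some f^±(t) ∈ ℤ[t]. -/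
open Matrix LaurentPolynomial

lemma detJ {n : Type*} [DecidableEq n] [Fintype n] {R : Type*} [CommRing R] :
    (Matrix.fromBlocks (0 : Matrix n n R) (1 : Matrix n n R) (1 : Matrix n n R)
      (0 : Matrix n n R)).det = (-1) ^ (Fintype.card n) := by
  have h1 : (Matrix.fromBlocks (0 : Matrix n n R) (1 : Matrix n n R) (-1 : Matrix n n R)
        (0 : Matrix n n R)) =
      Matrix.fromBlocks (1 : Matrix n n R) (1 : Matrix n n R) (0 : Matrix n n R)
          (1 : Matrix n n R) *
        Matrix.fromBlocks (1 : Matrix n n R) (0 : Matrix n n R) (-1 : Matrix n n R)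
          (1 : Matrix n n R) *
        Matrix.fromBlocks (1 : Matrix n n R) (1 : Matrix n n R) (0 : Matrix n n R)
          (1 : Matrix n n R) := by
    simp [Matrix.fromBlocks_multiply]
  have h2 : Matrix.fromBlocks (0 : Matrix n n R) (1 : Matrix n n R) (1 : Matrix n n R)
        (0 : Matrix n n R) *
      Matrix.fromBlocks (-1 : Matrix n n R) (0 : Matrix n n R) (0 : Matrix n n R)
        (1 : Matrix n n R) =
      Matrix.fromBlocks (0 : Matrix n n R) (1 : Matrix n n R) (-1 : Matrix n n R)
        (0 : Matrix n n R) := by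
    simp [Matrix.fromBlocks_multiply]
  have hd1 : (Matrix.fromBlocks (0 : Matrix n n R) (1 : Matrix n n R) (-1 : Matrix n n R)
      (0 : Matrix n n R)).det = 1 := by
    rw [h1, det_mul, det_mul]
    simp [det_fromBlocks_zero₂₁, det_fromBlocks_zero₁₂]
  have hd2 : (Matrix.fromBlocks (-1 : Matrix n n R) (0 : Matrix n n R) (0 : Matrix n n R)
      (1 : Matrix n n R)).det = (-1) ^ Fintype.card n := by
    rw [det_fromBlocks_zero₂₁, det_neg]
    simp
  have h3 := congrArg Matrix.det h2
  rw [det_mul, hd1, hd2] at h3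
  have hsq : ((-1 : R) ^ Fintype.card n) * ((-1 : R) ^ Fintype.card n) = 1 := by
    rw [← pow_add, ← two_mul, pow_mul]; simp
  calc (Matrix.fromBlocks (0 : Matrix n n R) (1 : Matrix n n R) (1 : Matrix n n R)
        (0 : Matrix n n R)).det
      = (Matrix.fromBlocks (0 : Matrix n n R) (1 : Matrix n n R) (1 : Matrix n n R)
          (0 : Matrix n n R)).det * ((-1) ^ Fintype.card n * (-1) ^ Fintype.card n) := by
        rw [hsq, mul_one]
    _ = (-1) ^ Fintype.card n := by rw [← mul_assoc, h3, one_mul]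

lemma det_fromBlocks_zero11 {n : Type*} [DecidableEq n] [Fintype n] {R : Type*} [CommRing R]
    (X Y Z : Matrix n n R) :
    (Matrix.fromBlocks 0 X Y Z).det = X.det * Y.det * (-1) ^ (Fintype.card n) := by
  have h : Matrix.fromBlocks (0 : Matrix n n R) X Y Z =
      Matrix.fromBlocks X 0 Z Y *
        Matrix.fromBlocks (0 : Matrix n n R) (1 : Matrix n n R) (1 : Matrix n n R)
          (0 : Matrix n n R) := by
    simp [Matrix.fromBlocks_multiply]
  rw [h, det_mul, det_fromBlocks_zero₁₂, detJ]

lemma aux_factor (g : ℕ) (V P : Matrix (Fin (2 * g)) (Fin (2 * g)) ℤ)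
    (hP : P.det = 1 ∨ P.det = -1)
    (h0 : ∀ i j : Fin (2 * g), (i : ℕ) < g → (j : ℕ) < g → (P * V * Pᵀ) i j = 0) :
    ∃ f : Polynomial ℤ,
      (T (-(g : ℤ)) : LaurentPolynomial ℤ) *
          ((T 1 : LaurentPolynomial ℤ) • V.map (Int.cast : ℤ → LaurentPolynomial ℤ) -
            (V.map (Int.cast : ℤ → LaurentPolynomial ℤ))ᵀ).det =
        Polynomial.eval₂ (Int.castRingHom (LaurentPolynomial ℤ)) (T 1) f *
          Polynomial.eval₂ (Int.castRingHom (LaurentPolynomial ℤ)) (T (-1)) f := by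
  set R := LaurentPolynomial ℤ
  set φ : ℤ →+* R := Int.castRingHom R with hφ
  have hcast : (Int.cast : ℤ → R) = ⇑φ := rfl
  rw [hcast]
  set e : Fin g ⊕ Fin g ≃ Fin (2 * g) := finSumFinEquiv.trans (finCongr (two_mul g).symm) with he
  have hel : ∀ i : Fin g, ((e (Sum.inl i) : Fin (2 * g)) : ℕ) = (i : ℕ) := by
    intro i; simp [he]
  set W : Matrix (Fin (2 * g)) (Fin (2 * g)) ℤ := P * V * Pᵀ with hWdef
  set B : Matrix (Fin g) (Fin g) ℤ := fun i j => W (e (Sum.inl i)) (e (Sum.inr j)) with hB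
  set Cc : Matrix (Fin g) (Fin g) ℤ := fun i j => W (e (Sum.inr i)) (e (Sum.inl j)) with hC
  set D : Matrix (Fin g) (Fin g) ℤ := fun i j => W (e (Sum.inr i)) (e (Sum.inr j)) with hD
  set f : Polynomial ℤ :=
    ((Polynomial.X : Polynomial ℤ) • B.map Polynomial.C - (Cc.map Polynomial.C)ᵀ).det with hf
  -- evaluation of f
  have heval : ∀ x : R, Polynomial.eval₂ φ x f =
      (x • B.map ⇑φ - (Cc.map ⇑φ)ᵀ).det := by
    intro x
    have h1 : Polynomial.eval₂ φ x f = (Polynomial.eval₂RingHom φ x) f := rfl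
    rw [h1, hf, RingHom.map_det]
    congr 1
    refine Matrix.ext fun i j => ?_
    simp only [RingHom.mapMatrix_apply, Matrix.map_apply, Matrix.sub_apply, Matrix.smul_apply,
      Matrix.transpose_apply, smul_eq_mul, Polynomial.coe_eval₂RingHom, Polynomial.eval₂_sub,
      Polynomial.eval₂_mul, Polynomial.eval₂_X, Polynomial.eval₂_C]
  -- congruence step
  have hPdet : (P.map ⇑φ).det * (P.map ⇑φ).det = 1 := by
    have hm : (P.map ⇑φ).det = φ P.det := by rw [RingHom.map_det, RingHom.mapMatrix_apply]
    rw [hm]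
    rcases hP with h | h <;> rw [h] <;> simp <;> ring
  have hcong : ((T 1 : R) • W.map ⇑φ - (W.map ⇑φ)ᵀ) =
      P.map ⇑φ * ((T 1 : R) • V.map ⇑φ - (V.map ⇑φ)ᵀ) * (P.map ⇑φ)ᵀ := by
    rw [hWdef, Matrix.map_mul, Matrix.map_mul, Matrix.transpose_map]
    simp only [Matrix.mul_sub, Matrix.sub_mul, Matrix.mul_smul, Matrix.smul_mul,
      Matrix.transpose_mul, Matrix.transpose_smul, Matrix.transpose_transpose, Matrix.mul_assoc]
  have hdet1 : ((T 1 : R) • V.map ⇑φ - (V.map ⇑φ)ᵀ).det =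
      ((T 1 : R) • W.map ⇑φ - (W.map ⇑φ)ᵀ).det := by
    rw [hcong, det_mul, det_mul, det_transpose]
    set d := ((T 1 : R) • V.map ⇑φ - (V.map ⇑φ)ᵀ).det
    set p := (P.map ⇑φ).det
    linear_combination (-d) * hPdet
  -- submatrix to blocks
  have hsub : ((T 1 : R) • W.map ⇑φ - (W.map ⇑φ)ᵀ).submatrix e e =
      Matrix.fromBlocks 0 ((T 1 : R) • B.map ⇑φ - (Cc.map ⇑φ)ᵀ)
        ((T 1 : R) • Cc.map ⇑φ - (B.map ⇑φ)ᵀ) ((T 1 : R) • D.map ⇑φ - (D.map ⇑φ)ᵀ) := by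
    refine Matrix.ext fun i j => ?_
    have hz : ∀ (i j : Fin g), W (e (Sum.inl i)) (e (Sum.inl j)) = 0 := by
      intro i j
      exact h0 _ _ (by rw [hel]; exact i.isLt) (by rw [hel]; exact j.isLt)
    cases i with
    | inl i =>
      cases j with
      | inl j =>
        simp [Matrix.submatrix_apply, Matrix.sub_apply, Matrix.smul_apply, Matrix.map_apply,
          Matrix.transpose_apply, hz i j, hz j i]
      | inr j =>
        simp [Matrix.submatrix_apply, Matrix.sub_apply, Matrix.smul_apply, Matrix.map_apply,
          Matrix.transpose_apply, hB, hC]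
        rfl
    | inr i =>
      cases j with
      | inl j =>
        simp [Matrix.submatrix_apply, Matrix.sub_apply, Matrix.smul_apply, Matrix.map_apply,
          Matrix.transpose_apply, hB, hC]
        rfl
      | inr j =>
        simp [Matrix.submatrix_apply, Matrix.sub_apply, Matrix.smul_apply, Matrix.map_apply,
          Matrix.transpose_apply, hD]
        rfl
  -- the Y block
  have hYb : ((T 1 : R) • Cc.map ⇑φ - (B.map ⇑φ)ᵀ) =
      (-(T 1 : R)) • ((T (-1) : R) • B.map ⇑φ - (Cc.map ⇑φ)ᵀ)ᵀ := by
    refine Matrix.ext fun i j => ?_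
    have hT : (T 1 : R) * T (-1) = 1 := by rw [← T_add]; simp
    simp only [Matrix.smul_apply, Matrix.sub_apply, Matrix.transpose_apply, Matrix.map_apply,
      smul_eq_mul]
    linear_combination (φ (W (e (Sum.inl j)) (e (Sum.inr i)))) * hT
  have hdetY : ((T 1 : R) • Cc.map ⇑φ - (B.map ⇑φ)ᵀ).det =
      (-1 : R) ^ g * T (g : ℤ) * Polynomial.eval₂ φ (T (-1)) f := by
    rw [hYb, det_smul, det_transpose, heval, Fintype.card_fin, neg_pow, T_pow, mul_one]
  refine ⟨f, ?_⟩
  have hTT : (T (-(g : ℤ)) : R) * T (g : ℤ) = 1 := by rw [← T_add]; simp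
  have hs2 : ((-1 : R) ^ g) * ((-1 : R) ^ g) = 1 := by
    rw [← pow_add, ← two_mul, pow_mul]; simp
  rw [hdet1, ← Matrix.det_submatrix_equiv_self e, hsub, det_fromBlocks_zero11, ← heval (T 1),
    hdetY, Fintype.card_fin]
  calc (T (-(g : ℤ)) : R) *
        (Polynomial.eval₂ φ (T 1) f *
          ((-1 : R) ^ g * T (g : ℤ) * Polynomial.eval₂ φ (T (-1)) f) * (-1 : R) ^ g)
      = ((T (-(g : ℤ)) : R) * T (g : ℤ)) * ((-1 : R) ^ g * (-1 : R) ^ g) *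
          (Polynomial.eval₂ φ (T 1) f * Polynomial.eval₂ φ (T (-1)) f) := by ring
    _ = Polynomial.eval₂ φ (T 1) f * Polynomial.eval₂ φ (T (-1)) f := by
        rw [hTT, hs2]; ring

/-- If `(V⁺, V⁻)` is a null-concordant pair of `2g × 2g` integer matrices,
then each symmetrized directed Alexander polynomial
`∇^±(t) = t^{-g}·det(t V^± - (V^±)ᵀ)` factors as `f^±(t)·f^±(t⁻¹)` for some
integer polynomial `f^±`. -/
theorem fox_milnor_of_null_concordant (g : ℕ)
    (Vp Vm : Matrix (Fin (2 * g)) (Fin (2 * g)) ℤ)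
    (hnc : ∃ P : Matrix (Fin (2 * g)) (Fin (2 * g)) ℤ,
      (P.det = 1 ∨ P.det = -1) ∧
      (∀ i j : Fin (2 * g), (i : ℕ) < g → (j : ℕ) < g → (P * Vp * Pᵀ) i j = 0) ∧
      (∀ i j : Fin (2 * g), (i : ℕ) < g → (j : ℕ) < g → (P * Vm * Pᵀ) i j = 0)) :
    ∃ fp fm : Polynomial ℤ,
      (T (-(g : ℤ)) : LaurentPolynomial ℤ) *
          ((T 1 : LaurentPolynomial ℤ) • Vp.map (Int.cast : ℤ → LaurentPolynomial ℤ) -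
            (Vp.map (Int.cast : ℤ → LaurentPolynomial ℤ))ᵀ).det =
        Polynomial.eval₂ (Int.castRingHom (LaurentPolynomial ℤ)) (T 1) fp *
          Polynomial.eval₂ (Int.castRingHom (LaurentPolynomial ℤ)) (T (-1)) fp ∧
      (T (-(g : ℤ)) : LaurentPolynomial ℤ) *
          ((T 1 : LaurentPolynomial ℤ) • Vm.map (Int.cast : ℤ → LaurentPolynomial ℤ) -
            (Vm.map (Int.cast : ℤ → LaurentPolynomial ℤ))ᵀ).det =
        Polynomial.eval₂ (Int.castRingHom (LaurentPolynomial ℤ)) (T 1) fm *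
          Polynomial.eval₂ (Int.castRingHom (LaurentPolynomial ℤ)) (T (-1)) fm := by
  obtain ⟨P, hP, hp, hm⟩ := hnc
  obtain ⟨fp, hfp⟩ := aux_factor g Vp P hP hp
  obtain ⟨fm, hfm⟩ := aux_factor g Vm P hP hm
  exact ⟨fp, fm, hfp, hfm⟩
end
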